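/- arXiv:1309.3691 — 4 statements merged into one kernel-verified Lean document; each statement's English description precedes it below -/
import Mathlib

section
/- If f is a twice differentiable function of two variables, homogeneous of degree r, satisfying the homogeneous Monge–Ampère equation f_{xx} f_{yy} − f_{xy}² = 0, then (r−1)[(r−1) f_x f_y − r f f_{xy}] = 0, i.e., either r = 1 or (r−1) f_x f_y = r f f_{xy}. -/
open Real

noncomputable def fx (f : ℝ × ℝ → ℝ) (p : ℝ × ℝ) : ℝ := fderiv ℝ f p (1, 0)
noncomputable def fy (f : ℝ × ℝ → ℝ) (p : ℝ × ℝ) : ℝ := fderiv ℝ f p (0, 1)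
noncomputable def fxx (f : ℝ × ℝ → ℝ) : ℝ × ℝ → ℝ := fx (fx f)
noncomputable def fxy (f : ℝ × ℝ → ℝ) : ℝ × ℝ → ℝ := fy (fx f)
noncomputable def fyy (f : ℝ × ℝ → ℝ) : ℝ × ℝ → ℝ := fy (fy f)

lemma fderiv_pair (f : ℝ × ℝ → ℝ) (p : ℝ × ℝ) (a b : ℝ) :
    fderiv ℝ f p (a, b) = a * fx f p + b * fy f p := by
  have h : (a, b) = a • ((1:ℝ), (0:ℝ)) + b • ((0:ℝ), (1:ℝ)) := by simp
  rw [h, map_add, map_smul, map_smul]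
  simp [fx, fy]

/-- Euler's homogeneous function theorem. -/
lemma euler (g : ℝ × ℝ → ℝ) (s : ℝ) (D : Set (ℝ × ℝ)) (hD : IsOpen D)
    (hg : DifferentiableOn ℝ g D)
    (hhom : ∀ t : ℝ, 0 < t → ∀ p ∈ D, g (t * p.1, t * p.2) = t ^ s * g p) :
    ∀ p ∈ D, p.1 * fx g p + p.2 * fy g p = s * g p := by
  intro p hp
  have hgd : DifferentiableAt ℝ g p := hg.differentiableAt (hD.mem_nhds hp)
  have hψ : HasDerivAt (fun t : ℝ => ((t * p.1, t * p.2) : ℝ × ℝ)) (p.1, p.2) 1 := by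
    apply HasDerivAt.prodMk <;> simpa using (hasDerivAt_id (1:ℝ)).mul_const _
  have hp1 : ((1:ℝ) * p.1, (1:ℝ) * p.2) = p := by simp
  have hA : HasFDerivAt g (fderiv ℝ g p) ((1:ℝ) * p.1, (1:ℝ) * p.2) := by
    rw [hp1]; exact hgd.hasFDerivAt
  have h1 : HasDerivAt (fun t : ℝ => g (t * p.1, t * p.2)) (fderiv ℝ g p (p.1, p.2)) 1 :=
    hA.comp_hasDerivAt 1 hψ
  have hev : (fun t : ℝ => g (t * p.1, t * p.2)) =ᶠ[nhds 1] fun t => t ^ s * g p := by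
    filter_upwards [Ioi_mem_nhds (zero_lt_one)] with t ht
    exact hhom t ht p hp
  have h2 : HasDerivAt (fun t : ℝ => t ^ s * g p) (s * g p) 1 := by
    have := (Real.hasDerivAt_rpow_const (x := 1) (p := s) (Or.inl one_ne_zero)).mul_const (g p)
    simpa using this
  have h3 : HasDerivAt (fun t : ℝ => g (t * p.1, t * p.2)) (s * g p) 1 :=
    h2.congr_of_eventuallyEq hev
  have := h1.unique h3
  rw [fderiv_pair] at this
  exact this

/-- Homogeneity of the partial derivatives. -/
lemma hom_deriv (f : ℝ × ℝ → ℝ) (r : ℝ) (D : Set (ℝ × ℝ)) (hD : IsOpen D)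
    (hf : DifferentiableOn ℝ f D)
    (hhom : ∀ t : ℝ, 0 < t → ∀ p ∈ D, f (t * p.1, t * p.2) = t ^ r * f p)
    (t : ℝ) (ht : 0 < t) (p : ℝ × ℝ) (hp : p ∈ D) (hpt : (t * p.1, t * p.2) ∈ D)
    (v : ℝ × ℝ) :
    t * fderiv ℝ f (t * p.1, t * p.2) v = t ^ r * fderiv ℝ f p v := by
  set L : (ℝ × ℝ) →L[ℝ] (ℝ × ℝ) := t • ContinuousLinearMap.id ℝ (ℝ × ℝ) with hL
  have hLp : L p = (t * p.1, t * p.2) := by simp [hL, Prod.smul_def, smul_eq_mul]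
  have hgd : DifferentiableAt ℝ f (t * p.1, t * p.2) := hf.differentiableAt (hD.mem_nhds hpt)
  have hgd' : DifferentiableAt ℝ f p := hf.differentiableAt (hD.mem_nhds hp)
  have hgdL : HasFDerivAt f (fderiv ℝ f (t * p.1, t * p.2)) (L p) := by
    rw [hLp]; exact hgd.hasFDerivAt
  have hcomp : HasFDerivAt (fun q => f (L q)) ((fderiv ℝ f (t * p.1, t * p.2)).comp L) p :=
    hgdL.comp p (L.hasFDerivAt (x := p))
  have hev : (fun q => f (L q)) =ᶠ[nhds p] fun q => t ^ r * f q := by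
    filter_upwards [hD.mem_nhds hp] with q hq
    have : L q = (t * q.1, t * q.2) := by simp [hL, Prod.smul_def, smul_eq_mul]
    rw [this]; exact hhom t ht q hq
  have hev' : (fun q => f (L q)) =ᶠ[nhds p] fun q => t ^ r • f q := by
    simpa [smul_eq_mul] using hev
  have h2 : HasFDerivAt (fun q => f (L q)) ((t ^ r) • fderiv ℝ f p) p :=
    HasFDerivAt.congr_of_eventuallyEq (hgd'.hasFDerivAt.const_smul (t ^ r)) hev'
  have heq := hcomp.unique h2
  have := congrArg (fun (A : (ℝ × ℝ) →L[ℝ] ℝ) => A v) heq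
  simp only [ContinuousLinearMap.comp_apply, ContinuousLinearMap.smul_apply, hL,
    ContinuousLinearMap.smul_apply, ContinuousLinearMap.id_apply, smul_eq_mul] at this
  rw [map_smul] at this
  simpa [smul_eq_mul] using this

theorem stmt1 (f : ℝ × ℝ → ℝ) (r : ℝ) (D : Set (ℝ × ℝ))
    (hD : IsOpen D) (hcone : ∀ p ∈ D, ∀ t : ℝ, 0 < t → (t * p.1, t * p.2) ∈ D)
    (hf : ContDiffOn ℝ 2 f D)
    (hhom : ∀ t : ℝ, 0 < t → ∀ p ∈ D, f (t * p.1, t * p.2) = t ^ r * f p)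
    (hMA : ∀ p ∈ D, fxx f p * fyy f p - (fxy f p) ^ 2 = 0) :
    ∀ p ∈ D, (r - 1) * ((r - 1) * fx f p * fy f p - r * f p * fxy f p) = 0 := by
  intro p hp
  -- f differentiable on D
  have hfd : DifferentiableOn ℝ f D := hf.differentiableOn two_ne_zero
  -- fderiv f is C¹ on D
  have hf' : ContDiffOn ℝ 1 (fun x => fderiv ℝ f x) D :=
    hf.fderiv_of_isOpen hD (by norm_num)
  have hfxd : DifferentiableOn ℝ (fx f) D := by
    intro q hq
    exact (((ContinuousLinearMap.apply ℝ ℝ ((1:ℝ),(0:ℝ))).differentiable.comp_differentiableOn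
      (hf'.differentiableOn one_ne_zero)) q hq)
  have hfyd : DifferentiableOn ℝ (fy f) D := by
    intro q hq
    exact (((ContinuousLinearMap.apply ℝ ℝ ((0:ℝ),(1:ℝ))).differentiable.comp_differentiableOn
      (hf'.differentiableOn one_ne_zero)) q hq)
  -- homogeneity of fx and fy, of degree r - 1
  have key : ∀ (v : ℝ × ℝ), ∀ t : ℝ, 0 < t → ∀ q ∈ D,
      fderiv ℝ f (t * q.1, t * q.2) v = t ^ (r - 1) * fderiv ℝ f q v := by
    intro v t ht q hq
    have := hom_deriv f r D hD hfd hhom t ht q hq (hcone q hq t ht) v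
    have ht' : t ≠ 0 := ne_of_gt ht
    field_simp at this ⊢
    rw [Real.rpow_sub ht, Real.rpow_one]
    field_simp
    linarith [this]
  have hfxhom : ∀ t : ℝ, 0 < t → ∀ q ∈ D, fx f (t * q.1, t * q.2) = t ^ (r - 1) * fx f q :=
    fun t ht q hq => key (1, 0) t ht q hq
  have hfyhom : ∀ t : ℝ, 0 < t → ∀ q ∈ D, fy f (t * q.1, t * q.2) = t ^ (r - 1) * fy f q :=
    fun t ht q hq => key (0, 1) t ht q hq
  -- Euler identities
  have e0 := euler f r D hD hfd hhom p hp
  have e1 := euler (fx f) (r - 1) D hD hfxd hfxhom p hp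
  have e2 := euler (fy f) (r - 1) D hD hfyd hfyhom p hp
  -- symmetry: fx (fy f) p = fy (fx f) p
  have hsymm : fx (fy f) p = fy (fx f) p := by
    have hf2 : ContDiffAt ℝ 2 f p := hf.contDiffAt (hD.mem_nhds hp)
    have hsym := hf2.isSymmSndFDerivAt (by simp)
    have hdf : DifferentiableAt ℝ (fderiv ℝ f) p :=
      (hf'.differentiableOn one_ne_zero).differentiableAt (hD.mem_nhds hp)
    have h1 : ∀ v w : ℝ × ℝ, fderiv ℝ (fun q => fderiv ℝ f q v) p w
        = fderiv ℝ (fderiv ℝ f) p w v := by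
      intro v w
      have : HasFDerivAt (fun q => fderiv ℝ f q v)
          ((ContinuousLinearMap.apply ℝ ℝ v).comp (fderiv ℝ (fderiv ℝ f) p)) p :=
        (ContinuousLinearMap.apply ℝ ℝ v).hasFDerivAt.comp p hdf.hasFDerivAt
      rw [this.fderiv]
      simp
    show fderiv ℝ (fun q => fderiv ℝ f q (0,1)) p (1,0) = fderiv ℝ (fun q => fderiv ℝ f q (1,0)) p (0,1)
    rw [h1, h1, hsym]
  have hma := hMA p hp
  -- unfold defs in Euler identities
  simp only [fxx, fxy, fyy] at hma ⊢
  set x := p.1; set y := p.2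
  set A := fx f p; set B := fy f p
  set a := fx (fx f) p; set b := fy (fx f) p; set c := fx (fy f) p; set d := fy (fy f) p
  rw [hsymm] at e2
  linear_combination (b*(r-1))*e0 + (b*x - (r-1)*B)*e1 + (b*y - (x*a + y*b))*e2 + (x*y)*hma
end

section
/- Let h be a C² real function on an open interval with h > 0 and h' ≠ 0, satisfying (r−1)(h')² − r h h'' = 0 for some real r ≠ 0. Then h(u) = (c₁ u + c₂)^r for some real constants c₁ ≠ 0 and c₂. -/
open Real

theorem stmt4 (a b r : ℝ) (hab : a < b) (hr : r ≠ 0) (h : ℝ → ℝ)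
    (hC2 : ContDiffOn ℝ 2 h (Set.Ioo a b))
    (hpos : ∀ u ∈ Set.Ioo a b, 0 < h u)
    (hd : ∀ u ∈ Set.Ioo a b, deriv h u ≠ 0)
    (hode : ∀ u ∈ Set.Ioo a b,
      (r - 1) * (deriv h u) ^ 2 - r * h u * deriv (deriv h) u = 0) :
    ∃ c₁ c₂ : ℝ, c₁ ≠ 0 ∧ (∀ u ∈ Set.Ioo a b, 0 < c₁ * u + c₂) ∧
      ∀ u ∈ Set.Ioo a b, h u = (c₁ * u + c₂) ^ r := by
  set s := Set.Ioo a b with hs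
  have hso : IsOpen s := isOpen_Ioo
  have hconv : Convex ℝ s := convex_Ioo a b
  have hdiff : ∀ u ∈ s, HasDerivAt h (deriv h u) u := fun u hu =>
    ((hC2.differentiableOn (by norm_num)).differentiableAt (hso.mem_nhds hu)).hasDerivAt
  have hderivC1 : ContDiffOn ℝ 1 (deriv h) s := hC2.deriv_of_isOpen hso (by norm_num)
  have hdiff2 : ∀ u ∈ s, HasDerivAt (deriv h) (deriv (deriv h) u) u := fun u hu =>
    ((hderivC1.differentiableOn (by norm_num)).differentiableAt (hso.mem_nhds hu)).hasDerivAt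
  set g : ℝ → ℝ := fun u => h u ^ (1/r) with hg
  set φ : ℝ → ℝ := fun u => deriv h u * (1/r) * h u ^ (1/r - 1) with hφ
  have hgd : ∀ u ∈ s, HasDerivAt g (φ u) u := fun u hu =>
    (hdiff u hu).rpow_const (Or.inl (hpos u hu).ne')
  have hφd : ∀ u ∈ s, HasDerivAt φ 0 u := by
    intro u hu
    have h1 : HasDerivAt (fun x => h x ^ (1/r - 1))
        (deriv h u * (1/r - 1) * h u ^ (1/r - 1 - 1)) u :=
      (hdiff u hu).rpow_const (Or.inl (hpos u hu).ne')
    have h2 : HasDerivAt φ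
        ((deriv (deriv h) u * (1/r)) * h u ^ (1/r - 1) +
          (deriv h u * (1/r)) * (deriv h u * (1/r - 1) * h u ^ (1/r - 1 - 1))) u :=
      ((hdiff2 u hu).mul_const (1/r)).mul h1
    convert h2 using 1
    have hrw : h u ^ (1/r - 1) = h u ^ (1/r - 1 - 1) * h u := by
      rw [← Real.rpow_add_one (hpos u hu).ne']
      norm_num
    have hodes : r * (h u * deriv (deriv h) u) = (r - 1) * (deriv h u) ^ 2 := by
      have := hode u hu; nlinarith [this]
    have hrr : r * (1/r) = 1 := mul_one_div_cancel hr
    rw [hrw]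
    linear_combination (-(1/r)^2 * h u ^ (1/r - 1 - 1)) * hodes +
      ((1/r) * h u ^ (1/r - 1 - 1) *
        (h u * deriv (deriv h) u - (deriv h u)^2)) * hrr
  have hgd' : ∀ u ∈ s, deriv g u = φ u := fun u hu => (hgd u hu).deriv
  have hEq : ∀ u ∈ s, deriv g =ᶠ[nhds u] φ := fun u hu =>
    Filter.eventuallyEq_of_mem (hso.mem_nhds hu) (fun x hx => hgd' x hx)
  have hdg : ∀ u ∈ s, HasDerivAt (deriv g) 0 u := fun u hu =>
    (hφd u hu).congr_of_eventuallyEq (hEq u hu)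
  set m : ℝ := (a + b) / 2 with hm
  have hms : m ∈ s := by constructor <;> simp [hm] <;> linarith
  set c₁ : ℝ := φ m with hc₁
  set c₂ : ℝ := g m - c₁ * m with hc₂
  have hconst1 : ∀ u ∈ s, deriv g u = c₁ := by
    intro u hu
    have := hconv.is_const_of_fderivWithin_eq_zero (𝕜 := ℝ)
      (f := deriv g)
      (fun x hx => (hdg x hx).differentiableAt.differentiableWithinAt)
      (fun x hx => by
        rw [fderivWithin_of_isOpen hso hx, (hdg x hx).hasFDerivAt.fderiv]
        ext t; simp) hu hms
    rw [this, hgd' m hms]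
  have hG : ∀ u ∈ s, HasDerivAt (fun x => g x - c₁ * x) 0 u := by
    intro u hu
    have := (hgd u hu).sub ((hasDerivAt_id u).const_mul c₁)
    rw [← hgd' u hu, hconst1 u hu] at this
    exact this.congr_deriv (by ring)
  have hlin : ∀ u ∈ s, g u = c₁ * u + c₂ := by
    intro u hu
    have := hconv.is_const_of_fderivWithin_eq_zero (𝕜 := ℝ)
      (f := fun x => g x - c₁ * x)
      (fun x hx => (hG x hx).differentiableAt.differentiableWithinAt)
      (fun x hx => by
        rw [fderivWithin_of_isOpen hso hx, (hG x hx).hasFDerivAt.fderiv]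
        ext t; simp) hu hms
    have h3 : g u - c₁ * u = g m - c₁ * m := this
    rw [hc₂]; linarith [h3]
  refine ⟨c₁, c₂, ?_, ?_, ?_⟩
  · rw [hc₁, hφ]
    exact mul_ne_zero (mul_ne_zero (hd m hms) (one_div_ne_zero hr))
      (ne_of_gt (Real.rpow_pos_of_pos (hpos m hms) _))
  · intro u hu
    rw [← hlin u hu]
    exact Real.rpow_pos_of_pos (hpos u hu) _
  · intro u hu
    rw [← hlin u hu, hg]
    show h u = (h u ^ (1/r)) ^ r
    rw [← Real.rpow_mul (hpos u hu).le, one_div, inv_mul_cancel₀ hr, Real.rpow_one]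
end

section
/- Let f be a C² function on an open connected domain D ⊆ ℝⁿ whose Hessian has rank at most 1 everywhere (all 2×2 minors of the Hessian vanish), homogeneous of degree r ≠ 1, with all first partial derivatives nowhere zero. Then f(x₁,…,xₙ) = F(c₁x₁ + ⋯ + cₙxₙ) for some real-valued function F and nonzero constants c₁,…,cₙ. -/
open Real

variable {n : ℕ}

/-- first partial derivative ∂f/∂xᵢ -/
noncomputable def pd (f : (Fin n → ℝ) → ℝ) (i : Fin n) (x : Fin n → ℝ) : ℝ :=
  fderiv ℝ f x (Pi.single i 1)

/-- second partial derivative ∂²f/∂xᵢ∂xⱼ -/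
noncomputable def pd2 (f : (Fin n → ℝ) → ℝ) (i j : Fin n) (x : Fin n → ℝ) : ℝ :=
  pd (fun y => pd f j y) i x

open Filter Set

/-- the continuous linear functional x ↦ ∑ i, c i * x i -/
noncomputable def lf (c : Fin n → ℝ) : (Fin n → ℝ) →L[ℝ] ℝ :=
  ∑ i, c i • ContinuousLinearMap.proj i

lemma lf_apply (c x : Fin n → ℝ) : lf c x = ∑ i, c i * x i := by
  simp [lf]

lemma clm_pi_apply (L : (Fin n → ℝ) →L[ℝ] ℝ) (x : Fin n → ℝ) :
    L x = ∑ i, x i * L (Pi.single i 1) := by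
  have hx : x = ∑ i, x i • (Pi.single i 1 : Fin n → ℝ) := by
    ext j
    simp [Finset.sum_apply, Pi.single_apply]
  conv_lhs => rw [hx]
  rw [map_sum]
  simp

lemma clm_zero_of (L : (Fin n → ℝ) →L[ℝ] ℝ) (h : ∀ i, L (Pi.single i 1) = 0) : L = 0 := by
  ext x
  rw [ContinuousLinearMap.zero_apply, clm_pi_apply]
  simp [h]

lemma const_of_deriv_zero {g : (Fin n → ℝ) → ℝ} {D : Set (Fin n → ℝ)}
    (hD : IsOpen D) (hc : IsPreconnected D)
    (h : ∀ x ∈ D, HasFDerivAt g (0 : (Fin n → ℝ) →L[ℝ] ℝ) x)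
    {x y : Fin n → ℝ} (hx : x ∈ D) (hy : y ∈ D) : g x = g y := by
  have hloc : ∀ z ∈ D, ∃ ε > 0, Metric.ball z ε ⊆ D ∧ ∀ w ∈ Metric.ball z ε, g w = g z := by
    intro z hz
    obtain ⟨ε, hε, hball⟩ := Metric.isOpen_iff.1 hD z hz
    refine ⟨ε, hε, hball, fun w hw => ?_⟩
    refine (convex_ball z ε).is_const_of_fderivWithin_eq_zero (𝕜 := ℝ)
      (fun u hu => ((h u (hball hu)).differentiableAt).differentiableWithinAt)
      (fun u hu => ?_) hw (Metric.mem_ball_self hε)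
    rw [fderivWithin_of_isOpen Metric.isOpen_ball hu, (h u (hball hu)).fderiv]
  by_contra hne
  set U : Set (Fin n → ℝ) := {z | z ∈ D ∧ g z = g y} with hU
  set V : Set (Fin n → ℝ) := {z | z ∈ D ∧ g z ≠ g y} with hV
  have hUo : IsOpen U := by
    rw [Metric.isOpen_iff]
    rintro z ⟨hz, hgz⟩
    obtain ⟨ε, hε, hball, hcst⟩ := hloc z hz
    exact ⟨ε, hε, fun w hw => ⟨hball hw, (hcst w hw).trans hgz⟩⟩
  have hVo : IsOpen V := by
    rw [Metric.isOpen_iff]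
    rintro z ⟨hz, hgz⟩
    obtain ⟨ε, hε, hball, hcst⟩ := hloc z hz
    exact ⟨ε, hε, fun w hw => ⟨hball hw, (hcst w hw).trans_ne hgz⟩⟩
  obtain ⟨w, -, ⟨-, hw2⟩, ⟨-, hw4⟩⟩ :=
    hc U V hUo hVo (fun z hz => by
      by_cases hgz : g z = g y
      · exact Or.inl ⟨hz, hgz⟩
      · exact Or.inr ⟨hz, hgz⟩)
      ⟨y, hy, hy, rfl⟩ ⟨x, hx, hx, hne⟩
  exact hw4 hw2

/-- Euler's identity for homogeneous functions. -/
lemma euler_id {g : (Fin n → ℝ) → ℝ} {D : Set (Fin n → ℝ)}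
    (hdiff : ∀ x ∈ D, DifferentiableAt ℝ g x) (ρ : ℝ)
    (hhom : ∀ t : ℝ, 0 < t → ∀ x ∈ D, g (t • x) = t ^ ρ * g x)
    {x : Fin n → ℝ} (hx : x ∈ D) : ∑ i, x i * pd g i x = ρ * g x := by
  have hγ : HasDerivAt (fun t : ℝ => t • x) x 1 := by
    simpa using (hasDerivAt_id (1:ℝ)).smul_const x
  have hfx : HasFDerivAt g (fderiv ℝ g x) ((1:ℝ) • x) := by
    rw [one_smul]; exact (hdiff x hx).hasFDerivAt
  have h1 : HasDerivAt (fun t : ℝ => g (t • x)) (fderiv ℝ g x x) 1 := by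
    exact hfx.comp_hasDerivAt 1 hγ
  have h2 : HasDerivAt (fun t : ℝ => t ^ ρ * g x) (ρ * g x) 1 := by
    have := (hasDerivAt_rpow_const (x := (1:ℝ)) (p := ρ) (Or.inl one_ne_zero)).mul_const (g x)
    simpa using this
  have heq : (fun t : ℝ => g (t • x)) =ᶠ[nhds 1] (fun t : ℝ => t ^ ρ * g x) := by
    filter_upwards [Ioi_mem_nhds one_pos] with t ht
    exact hhom t ht x hx
  have := (h2.congr_of_eventuallyEq heq).unique h1
  rw [this, clm_pi_apply]
  rfl

/-- partial derivatives of a homogeneous function are homogeneous of degree ρ - 1 -/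
lemma pd_hom {f : (Fin n → ℝ) → ℝ} {D : Set (Fin n → ℝ)} (hD : IsOpen D)
    (hcone : ∀ x ∈ D, ∀ t : ℝ, 0 < t → t • x ∈ D)
    (hdiff : ∀ x ∈ D, DifferentiableAt ℝ f x) (ρ : ℝ)
    (hhom : ∀ t : ℝ, 0 < t → ∀ x ∈ D, f (t • x) = t ^ ρ * f x)
    (i : Fin n) {x : Fin n → ℝ} (hx : x ∈ D) {t : ℝ} (ht : 0 < t) :
    pd f i (t • x) = t ^ (ρ - 1) * pd f i x := by
  have htx : t • x ∈ D := hcone x hx t ht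
  have hsmul : HasFDerivAt (fun y : Fin n → ℝ => t • y)
      (t • ContinuousLinearMap.id ℝ (Fin n → ℝ)) x :=
    (ContinuousLinearMap.id ℝ (Fin n → ℝ)).hasFDerivAt.const_smul t
  have h1 : HasFDerivAt (fun y => f (t • y))
      ((fderiv ℝ f (t • x)).comp (t • ContinuousLinearMap.id ℝ (Fin n → ℝ))) x :=
    (hdiff _ htx).hasFDerivAt.comp x hsmul
  have h2 : HasFDerivAt (fun y => t ^ ρ * f y) ((t ^ ρ) • fderiv ℝ f x) x :=
    (hdiff _ hx).hasFDerivAt.const_mul (t ^ ρ)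
  have heq : (fun y => f (t • y)) =ᶠ[nhds x] (fun y => t ^ ρ * f y) := by
    filter_upwards [hD.mem_nhds hx] with y hy
    exact hhom t ht y hy
  have hL := (h2.congr_of_eventuallyEq heq).unique h1
  have := congrArg (fun L : (Fin n → ℝ) →L[ℝ] ℝ => L (Pi.single i 1)) hL
  simp only [ContinuousLinearMap.coe_comp', Function.comp_apply,
    ContinuousLinearMap.smul_apply, ContinuousLinearMap.coe_smul',
    Pi.smul_apply, ContinuousLinearMap.coe_id', id_eq, smul_eq_mul] at this
  rw [map_smul, smul_eq_mul] at this
  have : pd f i (t • x) = (t ^ ρ / t) * pd f i x := by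
    field_simp [pd] at this ⊢
    simp only [pd] at this ⊢; linarith [this]
  rw [this]
  rw [Real.rpow_sub ht, Real.rpow_one]

theorem stmt10 (n : ℕ) (hn : 2 ≤ n) (r : ℝ) (hr : r ≠ 1)
    (f : (Fin n → ℝ) → ℝ) (D : Set (Fin n → ℝ))
    (hD : IsOpen D) (hconn : IsConnected D)
    (hcone : ∀ x ∈ D, ∀ t : ℝ, 0 < t → t • x ∈ D)
    (hf : ContDiffOn ℝ 2 f D)
    (hhom : ∀ t : ℝ, 0 < t → ∀ x ∈ D, f (t • x) = t ^ r * f x)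
    (hpd : ∀ i : Fin n, ∀ x ∈ D, pd f i x ≠ 0)
    (hrank : ∀ x ∈ D, ∀ i j k l : Fin n,
      pd2 f i l x * pd2 f j k x = pd2 f i k x * pd2 f j l x) :
    ∃ c : Fin n → ℝ, (∀ i, c i ≠ 0) ∧
      ∃ F : ℝ → ℝ, ∀ x ∈ D, f x = F (∑ i, c i * x i) := by
  obtain ⟨x₀, hx₀⟩ := hconn.nonempty
  have hpre := hconn.isPreconnected
  have hnpos : 0 < n := by omega
  set i₀ : Fin n := ⟨0, hnpos⟩ with hi₀
  -- differentiability facts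
  have hdf : ∀ x ∈ D, DifferentiableAt ℝ f x := fun x hx =>
    ((hf.differentiableOn (by norm_num)) x hx).differentiableAt (hD.mem_nhds hx)
  have hpdC : ∀ i, ContDiffOn ℝ 1 (fun x => pd f i x) D := fun i =>
    (hf.fderiv_of_isOpen hD (by norm_num)).clm_apply contDiffOn_const
  have hdpd : ∀ i, ∀ x ∈ D, DifferentiableAt ℝ (pd f i) x := fun i x hx =>
    (((hpdC i).differentiableOn (by norm_num)) x hx).differentiableAt (hD.mem_nhds hx)
  have hcpd : ∀ i, ContinuousOn (pd f i) D := fun i => (hpdC i).continuousOn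
  -- Euler's identity
  have heuler : ∀ x ∈ D, ∑ i, x i * pd f i x = r * f x := fun x hx =>
    euler_id hdf r hhom hx
  have hpdhom : ∀ i, ∀ t : ℝ, 0 < t → ∀ x ∈ D, pd f i (t • x) = t ^ (r - 1) * pd f i x :=
    fun i t ht x hx => pd_hom hD hcone hdf r hhom i hx ht
  have heuler2 : ∀ i, ∀ x ∈ D, ∑ l, x l * pd2 f l i x = (r - 1) * pd f i x := fun i x hx =>
    euler_id (hdpd i) (r - 1) (fun t ht y hy => hpdhom i t ht y hy) hx
  have hr1 : (r : ℝ) - 1 ≠ 0 := sub_ne_zero.2 hr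
  -- key proportionality identity
  have hkey : ∀ x ∈ D, ∀ i k : Fin n,
      pd2 f k i x * pd f i₀ x = pd2 f k i₀ x * pd f i x := by
    intro x hx i k
    apply mul_left_cancel₀ hr1
    calc (r - 1) * (pd2 f k i x * pd f i₀ x)
        = pd2 f k i x * ((r - 1) * pd f i₀ x) := by ring
      _ = pd2 f k i x * ∑ l, x l * pd2 f l i₀ x := by rw [heuler2 i₀ x hx]
      _ = ∑ l, x l * (pd2 f k i x * pd2 f l i₀ x) := by
            rw [Finset.mul_sum]; exact Finset.sum_congr rfl fun l _ => by ring
      _ = ∑ l, x l * (pd2 f k i₀ x * pd2 f l i x) := by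
            exact Finset.sum_congr rfl fun l _ => by rw [hrank x hx k l i₀ i]
      _ = pd2 f k i₀ x * ∑ l, x l * pd2 f l i x := by
            rw [Finset.mul_sum]; exact Finset.sum_congr rfl fun l _ => by ring
      _ = pd2 f k i₀ x * ((r - 1) * pd f i x) := by rw [heuler2 i x hx]
      _ = (r - 1) * (pd2 f k i₀ x * pd f i x) := by ring
  -- the constant ratios
  set c : Fin n → ℝ := fun i => pd f i x₀ / pd f i₀ x₀ with hc
  have hratio : ∀ i, ∀ x ∈ D, pd f i x / pd f i₀ x = c i := by
    intro i x hx
    refine const_of_deriv_zero hD hpre (g := fun x => pd f i x * (pd f i₀ x)⁻¹)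
      ?_ hx hx₀
    intro z hz
    have hdi := (hdpd i z hz).hasFDerivAt
    have hd0 := (hdpd i₀ z hz).hasFDerivAt
    have hne := hpd i₀ z hz
    have hinv : HasDerivAt (fun u : ℝ => u⁻¹) (-((pd f i₀ z) ^ 2)⁻¹) (pd f i₀ z) :=
      hasDerivAt_inv hne
    have hcompinv : HasFDerivAt (fun y => (pd f i₀ y)⁻¹)
        ((-((pd f i₀ z) ^ 2)⁻¹) • fderiv ℝ (pd f i₀) z) z :=
      hinv.comp_hasFDerivAt z hd0
    have hq := hdi.mul hcompinv
    have hzero : (pd f i z • ((-((pd f i₀ z) ^ 2)⁻¹) • fderiv ℝ (pd f i₀) z) +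
        (pd f i₀ z)⁻¹ • fderiv ℝ (pd f i) z) = 0 := by
      apply clm_zero_of
      intro k
      have hk := hkey z hz i k
      have e1 : fderiv ℝ (pd f i₀) z (Pi.single k 1) = pd2 f k i₀ z := rfl
      have e2 : fderiv ℝ (pd f i) z (Pi.single k 1) = pd2 f k i z := rfl
      simp only [ContinuousLinearMap.add_apply, ContinuousLinearMap.smul_apply,
        smul_eq_mul, e1, e2]
      field_simp
      linear_combination hk
    rw [hzero] at hq
    exact hq
  have hcne : ∀ i, c i ≠ 0 := fun i => div_ne_zero (hpd i x₀ hx₀) (hpd i₀ x₀ hx₀)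
  have hc0 : c i₀ = 1 := div_self (hpd i₀ x₀ hx₀)
  have hpdc : ∀ i, ∀ x ∈ D, pd f i x = c i * pd f i₀ x := by
    intro i x hx
    have := hratio i x hx
    field_simp [hpd i₀ x hx] at this
    linarith [this]
  set S : (Fin n → ℝ) → ℝ := fun x => ∑ j, c j * x j with hS
  have hSf : ∀ x ∈ D, pd f i₀ x * S x = r * f x := by
    intro x hx
    rw [← heuler x hx, hS]
    rw [Finset.mul_sum]
    exact Finset.sum_congr rfl fun j _ => by rw [hpdc j x hx]; ring
  have hScont : Continuous S := by
    apply continuous_finset_sum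
    exact fun j _ => continuous_const.mul (continuous_apply j)
  have hSsingle : ∀ t : ℝ, ∀ x : Fin n → ℝ,
      S (x + t • (Pi.single i₀ 1 : Fin n → ℝ)) = S x + t := by
    intro t x
    rw [hS]
    simp only [Pi.add_apply, Pi.smul_apply, smul_eq_mul]
    have h1 : ∀ j, c j * (x j + t * (Pi.single i₀ 1 : Fin n → ℝ) j) =
        c j * x j + (if j = i₀ then c j * t else 0) := by
      intro j
      simp only [Pi.single_apply]
      split_ifs <;> ring
    rw [Finset.sum_congr rfl fun j _ => h1 j, Finset.sum_add_distrib,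
      Finset.sum_ite_eq' Finset.univ i₀ (fun j => c j * t)]
    simp [hc0]
  rcases eq_or_ne r 0 with hr0 | hr0
  · -- degree 0 : impossible
    exfalso
    have hS0 : ∀ x ∈ D, S x = 0 := by
      intro x hx
      have := hSf x hx
      rw [hr0, zero_mul] at this
      exact (mul_eq_zero.1 this).resolve_left (hpd i₀ x hx)
    have hSlf : S = ⇑(lf c) := by
      funext y; rw [lf_apply]
    have hfd : fderiv ℝ S x₀ = lf c := by
      rw [hSlf]; exact (lf c).fderiv
    have hev : S =ᶠ[nhds x₀] (fun _ => (0:ℝ)) :=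
      eventually_of_mem (hD.mem_nhds hx₀) hS0
    have hfd0 : fderiv ℝ S x₀ = 0 := by
      rw [hev.fderiv_eq, fderiv_fun_const]
      rfl
    have : (lf c) (Pi.single i₀ 1) = 0 := by
      rw [← hfd, hfd0]; rfl
    rw [lf_apply] at this
    simp only [Pi.single_apply, mul_ite, mul_one, mul_zero,
      Finset.sum_ite_eq', Finset.mem_univ, if_true] at this
    rw [this] at hc0
    norm_num at hc0
  · -- degree r ≠ 0
    have hSne : ∀ x ∈ D, S x ≠ 0 := by
      intro x₁ hx₁ hS1
      have hf1 : f x₁ = 0 := by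
        have := hSf x₁ hx₁
        rw [hS1, mul_zero] at this
        exact (mul_eq_zero.1 this.symm).resolve_left hr0
      set e : Fin n → ℝ := (Pi.single i₀ 1 : Fin n → ℝ) with he
      set γ : ℝ → (Fin n → ℝ) := fun t => x₁ + t • e with hγdef
      have hγ0 : γ 0 = x₁ := by simp [hγdef]
      have hγc : Continuous γ := by
        apply continuous_const.add
        exact continuous_id.smul continuous_const
      have hγd : HasDerivAt γ e 0 := by
        simpa [hγdef] using ((hasDerivAt_id (0:ℝ)).smul_const e).const_add x₁
      have hφ : HasDerivAt (fun t : ℝ => f (γ t)) (pd f i₀ x₁) 0 := by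
        have h := (hdf x₁ hx₁).hasFDerivAt
        have h' : HasFDerivAt f (fderiv ℝ f x₁) (γ 0) := by rw [hγ0]; exact h
        have := h'.comp_hasDerivAt 0 hγd
        exact this
      have hslope := hasDerivAt_iff_tendsto_slope.1 hφ
      have hmul : Tendsto (fun t => r * slope (fun t : ℝ => f (γ t)) 0 t)
          (nhdsWithin 0 {(0:ℝ)}ᶜ) (nhds (r * pd f i₀ x₁)) := hslope.const_mul r
      have hevD : ∀ᶠ t in nhdsWithin (0:ℝ) {(0:ℝ)}ᶜ, γ t ∈ D := by
        apply eventually_nhdsWithin_of_eventually_nhds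
        have : Tendsto γ (nhds 0) (nhds x₁) := by
          rw [← hγ0]; exact hγc.continuousAt
        exact this (hD.mem_nhds hx₁)
      have hcongr : (fun t => r * slope (fun t : ℝ => f (γ t)) 0 t)
          =ᶠ[nhdsWithin (0:ℝ) {(0:ℝ)}ᶜ] (fun t => pd f i₀ (γ t)) := by
        filter_upwards [hevD, self_mem_nhdsWithin] with t htD htne
        have htne' : (t : ℝ) ≠ 0 := htne
        rw [slope_def_field]
        rw [hγ0, hf1]
        have hrf : r * f (γ t) = pd f i₀ (γ t) * S (γ t) := (hSf (γ t) htD).symm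
        have hSγ : S (γ t) = t := by
          rw [hγdef]
          simp only
          rw [hSsingle t x₁, hS1, zero_add]
        rw [sub_zero, sub_zero]
        have key : r * f (γ t) = pd f i₀ (γ t) * t := by rw [hrf, hSγ]
        field_simp
        linear_combination key
      have htend2 : Tendsto (fun t => pd f i₀ (γ t)) (nhdsWithin (0:ℝ) {(0:ℝ)}ᶜ)
          (nhds (pd f i₀ x₁)) := by
        have hca : ContinuousAt (pd f i₀) x₁ :=
          (hcpd i₀).continuousAt (hD.mem_nhds hx₁)
        have hγt : Tendsto γ (nhds 0) (nhds x₁) := by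
          rw [← hγ0]; exact hγc.continuousAt
        exact (Filter.Tendsto.comp hca hγt).mono_left nhdsWithin_le_nhds
      have hlim := tendsto_nhds_unique (hmul.congr' hcongr) htend2
      have : (r - 1) * pd f i₀ x₁ = 0 := by linarith [hlim]
      exact hpd i₀ x₁ hx₁ ((mul_eq_zero.1 this).resolve_left hr1)
    -- constant sign
    set s : ℝ := if 0 < S x₀ then 1 else -1 with hsdef
    have hs1 : s = 1 ∨ s = -1 := by
      rw [hsdef]; split <;> simp
    have hsne : s ≠ 0 := by rcases hs1 with h | h <;> rw [h] <;> norm_num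
    have hsx₀ : 0 < s * S x₀ := by
      rw [hsdef]
      split_ifs with h
      · rw [one_mul]; exact h
      · have hlt : S x₀ < 0 := lt_of_le_of_ne (not_lt.1 h) (hSne x₀ hx₀)
        nlinarith
    have hSpos : ∀ x ∈ D, 0 < s * S x := by
      intro x hx
      by_contra hle
      push_neg at hle
      have hne' : s * S x ≠ 0 := mul_ne_zero hsne (hSne x hx)
      have hlt : s * S x < 0 := lt_of_le_of_ne hle hne'
      have hcont : ContinuousOn (fun y => s * S y) D :=
        (continuous_const.mul hScont).continuousOn
      obtain ⟨z, hz, hz0⟩ := hpre.intermediate_value hx hx₀ hcont ⟨hlt.le, hsx₀.le⟩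
      exact hSne z hz (by
        rcases mul_eq_zero.1 hz0 with h | h
        · exact absurd h hsne
        · exact h)
    set B : (Fin n → ℝ) → ℝ := fun x => s * S x with hB
    set A : ℝ := f x₀ * (B x₀) ^ (-r) with hA
    have hBd : ∀ z, HasFDerivAt B (s • lf c) z := by
      intro z
      have : HasFDerivAt (⇑(lf c)) (lf c) z := (lf c).hasFDerivAt
      have h2 := this.const_smul s
      have : (s • ⇑(lf c)) = B := by
        funext y; rw [hB]; simp [lf_apply, hS]
      rwa [this] at h2
    have hGconst : ∀ x ∈ D, f x * (B x) ^ (-r) = A := by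
      intro x hx
      refine const_of_deriv_zero hD hpre (g := fun y => f y * (B y) ^ (-r)) ?_ hx hx₀
      intro z hz
      have hBz : 0 < B z := hSpos z hz
      have hfz := (hdf z hz).hasFDerivAt
      have hq : HasDerivAt (fun u : ℝ => u ^ (-r)) (-r * (B z) ^ (-r - 1)) (B z) :=
        hasDerivAt_rpow_const (Or.inl hBz.ne')
      have hcomp : HasFDerivAt (fun y => (B y) ^ (-r))
          ((-r * (B z) ^ (-r - 1)) • (s • lf c)) z :=
        hq.comp_hasFDerivAt z (hBd z)
      have hmul := hfz.mul hcomp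
      have hzero : (f z • ((-r * (B z) ^ (-r - 1)) • (s • lf c)) +
          (B z) ^ (-r) • fderiv ℝ f z) = 0 := by
        apply clm_zero_of
        intro k
        have hrf : pd f i₀ z * S z = r * f z := hSf z hz
        have hpk : fderiv ℝ f z (Pi.single k 1) = c k * pd f i₀ z := hpdc k z hz
        have hlfk : (lf c) (Pi.single k 1) = c k := by
          rw [lf_apply]
          simp [Pi.single_apply, mul_ite, Finset.sum_ite_eq']
        have hBexp : (B z) ^ (-r) = (B z) ^ (-r - 1) * B z := by
          nth_rewrite 1 [show (-r : ℝ) = (-r - 1) + 1 by ring]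
          rw [Real.rpow_add hBz, Real.rpow_one]
        simp only [ContinuousLinearMap.add_apply, ContinuousLinearMap.smul_apply,
          smul_eq_mul, hlfk, hpk]
        rw [hBexp]
        have hBS : B z = s * S z := rfl
        linear_combination (B z ^ (-r-1) * s * c k) * hrf +
          (c k * pd f i₀ z * B z ^ (-r-1)) * hBS
      rw [hzero] at hmul
      exact hmul
    refine ⟨c, hcne, fun u => A * (s * u) ^ r, fun x hx => ?_⟩
    have hGz := hGconst x hx
    have hBpos : 0 < B x := hSpos x hx
    have hBrne : (B x) ^ r ≠ 0 := (Real.rpow_pos_of_pos hBpos r).ne'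
    have hfx : f x = A * (B x) ^ r := by
      have h1 : f x * ((B x) ^ (-r) * (B x) ^ r) = A * (B x) ^ r := by
        rw [← mul_assoc, hGz]
      rwa [← Real.rpow_add hBpos, neg_add_cancel, Real.rpow_zero, mul_one] at h1
    exact hfx
end

section
/- The function f(x,y,z) = (x + y + √(yz))^r on the positive octant, with r > 1, has Hessian determinant identically zero (so its graph hypersurface in ℝ⁴ has vanishing Gauss–Kronecker curvature), but its Hessian has rank greater than 1 at some point (so the graph hypersurface is not flat). -/
open Real

variable {n : ℕ}

noncomputable def hess (f : (Fin n → ℝ) → ℝ) (x : Fin n → ℝ) :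
    Matrix (Fin n) (Fin n) ℝ :=
  Matrix.of fun i j => pd2 f i j x

namespace S15

noncomputable def P (i : Fin 3) : ((Fin 3 → ℝ) →L[ℝ] ℝ) := ContinuousLinearMap.proj i

noncomputable def sf (x : Fin 3 → ℝ) : ℝ := Real.sqrt (x 1 * x 2)
noncomputable def gf (x : Fin 3 → ℝ) : ℝ := x 0 + x 1 + sf x

noncomputable def Ds (x : Fin 3 → ℝ) : ((Fin 3 → ℝ) →L[ℝ] ℝ) :=
  (x 2 / (2 * sf x)) • P 1 + (x 1 / (2 * sf x)) • P 2

noncomputable def Dg (x : Fin 3 → ℝ) : ((Fin 3 → ℝ) →L[ℝ] ℝ) := P 0 + P 1 + Ds x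

noncomputable def G (x : Fin 3 → ℝ) : Fin 3 → ℝ :=
  ![1, 1 + x 2 / (2 * sf x), x 1 / (2 * sf x)]

noncomputable def T (x : Fin 3 → ℝ) : Fin 3 → Fin 3 → ℝ :=
  ![![0, 0, 0],
    ![0, -(x 2)^2/(4 * sf x^3), 1/(2*sf x) - x 1 * x 2/(4 * sf x^3)],
    ![0, 1/(2*sf x) - x 1 * x 2/(4 * sf x^3), -(x 1)^2/(4 * sf x^3)]]

lemma hasFDerivAt_sf {x : Fin 3 → ℝ} (h1 : 0 < x 1) (h2 : 0 < x 2) :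
    HasFDerivAt sf (Ds x) x := by
  have hmul : HasFDerivAt (fun y : Fin 3 → ℝ => y 1 * y 2) (x 1 • P 2 + x 2 • P 1) x :=
    (P 1).hasFDerivAt.mul (P 2).hasFDerivAt
  have hne : x 1 * x 2 ≠ 0 := by positivity
  have h := (Real.hasDerivAt_sqrt hne).comp_hasFDerivAt x hmul
  refine h.congr_fderiv ?_
  ext v
  simp [Ds, P, sf]
  ring

lemma hasFDerivAt_gf {x : Fin 3 → ℝ} (h1 : 0 < x 1) (h2 : 0 < x 2) :
    HasFDerivAt gf (Dg x) x :=
  (((P 0).hasFDerivAt.add (P 1).hasFDerivAt).add (hasFDerivAt_sf h1 h2))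

lemma sf_pos {x : Fin 3 → ℝ} (h1 : 0 < x 1) (h2 : 0 < x 2) : 0 < sf x :=
  Real.sqrt_pos.2 (by positivity)

lemma gf_pos {x : Fin 3 → ℝ} (h0 : 0 < x 0) (h1 : 0 < x 1) (h2 : 0 < x 2) : 0 < gf x := by
  have := sf_pos h1 h2; unfold gf at *; linarith

lemma Dg_apply {x : Fin 3 → ℝ} (j : Fin 3) : Dg x (Pi.single j 1) = G x j := by
  fin_cases j <;> simp [Dg, Ds, P, G, Pi.single_apply]

lemma hasFDerivAt_f (r : ℝ) {x : Fin 3 → ℝ} (h0 : 0 < x 0) (h1 : 0 < x 1) (h2 : 0 < x 2) :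
    HasFDerivAt (fun y => gf y ^ r) ((r * gf x ^ (r - 1)) • Dg x) x :=
  (Real.hasDerivAt_rpow_const (Or.inl (gf_pos h0 h1 h2).ne')).comp_hasFDerivAt x
    (hasFDerivAt_gf h1 h2)

lemma pd_f (r : ℝ) (j : Fin 3) {x : Fin 3 → ℝ} (h0 : 0 < x 0) (h1 : 0 < x 1) (h2 : 0 < x 2) :
    pd (fun y => gf y ^ r) j x = r * gf x ^ (r - 1) * G x j := by
  rw [pd, (hasFDerivAt_f r h0 h1 h2).fderiv]
  simp [Dg_apply, mul_assoc]

lemma eventually_pos {x : Fin 3 → ℝ} (hx : ∀ i, 0 < x i) :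
    ∀ᶠ y in nhds x, 0 < y 0 ∧ 0 < y 1 ∧ 0 < y 2 := by
  have hO : IsOpen {y : Fin 3 → ℝ | 0 < y 0 ∧ 0 < y 1 ∧ 0 < y 2} :=
    ((isOpen_lt continuous_const (continuous_apply 0)).inter
      ((isOpen_lt continuous_const (continuous_apply 1)).inter
        (isOpen_lt continuous_const (continuous_apply 2))))
  exact hO.mem_nhds ⟨hx 0, hx 1, hx 2⟩

lemma hasFDerivAt_A (r : ℝ) {x : Fin 3 → ℝ} (h0 : 0 < x 0) (h1 : 0 < x 1) (h2 : 0 < x 2) :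
    HasFDerivAt (fun y => r * gf y ^ (r - 1))
      ((r * ((r - 1) * gf x ^ (r - 2))) • Dg x) x := by
  have h := ((Real.hasDerivAt_rpow_const (p := r - 1)
      (Or.inl (gf_pos h0 h1 h2).ne')).comp_hasFDerivAt x
      (hasFDerivAt_gf h1 h2)).const_mul r
  have : r - 1 - 1 = r - 2 := by ring
  rw [this] at h
  refine h.congr_fderiv ?_
  ext v; simp; ring

lemma hasFDerivAt_inv2s {x : Fin 3 → ℝ} (h1 : 0 < x 1) (h2 : 0 < x 2) :
    HasFDerivAt (fun y => (2 * sf y)⁻¹) ((-((2 * sf x)^2)⁻¹) • (2 : ℝ) • Ds x) x := by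
  have hs := (hasFDerivAt_sf h1 h2).const_mul (2 : ℝ)
  have hne : 2 * sf x ≠ 0 := by have := sf_pos h1 h2; positivity
  exact (hasDerivAt_inv hne).comp_hasFDerivAt x hs

end S15

namespace S15

noncomputable def Sv (x : Fin 3 → ℝ) : Fin 3 → ℝ := ![0, x 2/(2*sf x), x 1/(2*sf x)]

lemma Ds_apply {x : Fin 3 → ℝ} (j : Fin 3) : Ds x (Pi.single j 1) = Sv x j := by
  fin_cases j <;> simp [Ds, P, Sv, Pi.single_apply]

lemma pd2_f0 (r : ℝ) (i : Fin 3) {x : Fin 3 → ℝ} (hx : ∀ i, 0 < x i) :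
    pd2 (fun y => gf y ^ r) i 0 x
      = r * (r-1) * gf x ^ (r-2) * G x i * G x 0 + r * gf x ^ (r-1) * T x i 0 := by
  have h0 := hx 0; have h1 := hx 1; have h2 := hx 2
  unfold pd2 pd
  have hev : (fun y => fderiv ℝ (fun z => gf z ^ r) y (Pi.single (0:Fin 3) 1))
      =ᶠ[nhds x] (fun y => r * gf y ^ (r-1)) := by
    filter_upwards [eventually_pos hx] with y hy
    have h := pd_f r 0 hy.1 hy.2.1 hy.2.2
    simpa [pd, G] using h
  rw [hev.fderiv_eq, (hasFDerivAt_A r h0 h1 h2).fderiv,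
    ContinuousLinearMap.smul_apply, Dg_apply]
  fin_cases i
  · norm_num [G, T]; ring
  · norm_num [G, T]; left; ring
  · norm_num [G, T]; left; ring

end S15

namespace S15

lemma hasFDerivAt_B1 {x : Fin 3 → ℝ} (h1 : 0 < x 1) (h2 : 0 < x 2) :
    HasFDerivAt (fun y => 1 + y 2 / (2 * sf y))
      (x 2 • ((-((2 * sf x)^2)⁻¹) • (2 : ℝ) • Ds x) + (2 * sf x)⁻¹ • P 2) x := by
  have h := ((P 2).hasFDerivAt.mul (hasFDerivAt_inv2s h1 h2)).const_add (1 : ℝ)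
  simpa [div_eq_mul_inv, P] using h

lemma hasFDerivAt_B2 {x : Fin 3 → ℝ} (h1 : 0 < x 1) (h2 : 0 < x 2) :
    HasFDerivAt (fun y => y 1 / (2 * sf y))
      (x 1 • ((-((2 * sf x)^2)⁻¹) • (2 : ℝ) • Ds x) + (2 * sf x)⁻¹ • P 1) x := by
  have h := ((P 1).hasFDerivAt.mul (hasFDerivAt_inv2s h1 h2))
  simpa [div_eq_mul_inv, P, Pi.mul_def] using h

lemma pd2_f1 (r : ℝ) (i : Fin 3) {x : Fin 3 → ℝ} (hx : ∀ i, 0 < x i) :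
    pd2 (fun y => gf y ^ r) i 1 x
      = r * (r-1) * gf x ^ (r-2) * G x i * G x 1 + r * gf x ^ (r-1) * T x i 1 := by
  have h0 := hx 0; have h1 := hx 1; have h2 := hx 2
  have hs := sf_pos h1 h2
  unfold pd2 pd
  have hev : (fun y => fderiv ℝ (fun z => gf z ^ r) y (Pi.single (1:Fin 3) 1))
      =ᶠ[nhds x] (fun y => r * gf y ^ (r-1) * (1 + y 2 / (2 * sf y))) := by
    filter_upwards [eventually_pos hx] with y hy
    have h := pd_f r 1 hy.1 hy.2.1 hy.2.2
    simpa [pd, G] using h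
  rw [hev.fderiv_eq, HasFDerivAt.fderiv (f := fun y => r * gf y ^ (r-1) * (1 + y 2 / (2 * sf y)))
    ((hasFDerivAt_A r h0 h1 h2).mul (hasFDerivAt_B1 h1 h2))]
  fin_cases i <;>
    simp [ContinuousLinearMap.add_apply, ContinuousLinearMap.smul_apply,
      Dg_apply, Ds_apply, G, T, Sv, P, Pi.single_apply, smul_eq_mul] <;>
    field_simp <;> ring

end S15

namespace S15

lemma pd2_f2 (r : ℝ) (i : Fin 3) {x : Fin 3 → ℝ} (hx : ∀ i, 0 < x i) :
    pd2 (fun y => gf y ^ r) i 2 x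
      = r * (r-1) * gf x ^ (r-2) * G x i * G x 2 + r * gf x ^ (r-1) * T x i 2 := by
  have h0 := hx 0; have h1 := hx 1; have h2 := hx 2
  have hs := sf_pos h1 h2
  unfold pd2 pd
  have hev : (fun y => fderiv ℝ (fun z => gf z ^ r) y (Pi.single (2:Fin 3) 1))
      =ᶠ[nhds x] (fun y => r * gf y ^ (r-1) * (y 1 / (2 * sf y))) := by
    filter_upwards [eventually_pos hx] with y hy
    have h := pd_f r 2 hy.1 hy.2.1 hy.2.2
    simpa [pd, G] using h
  rw [hev.fderiv_eq, HasFDerivAt.fderiv (f := fun y => r * gf y ^ (r-1) * (y 1 / (2 * sf y)))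
    ((hasFDerivAt_A r h0 h1 h2).mul (hasFDerivAt_B2 h1 h2))]
  fin_cases i <;>
    simp [ContinuousLinearMap.add_apply, ContinuousLinearMap.smul_apply,
      Dg_apply, Ds_apply, G, T, Sv, P, Pi.single_apply, smul_eq_mul] <;>
    field_simp <;> ring

end S15

namespace S15

lemma pd2_f (r : ℝ) (i j : Fin 3) {x : Fin 3 → ℝ} (hx : ∀ i, 0 < x i) :
    pd2 (fun y => gf y ^ r) i j x
      = r * (r-1) * gf x ^ (r-2) * G x i * G x j + r * gf x ^ (r-1) * T x i j := by
  fin_cases j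
  · exact pd2_f0 r i hx
  · exact pd2_f1 r i hx
  · exact pd2_f2 r i hx

end S15


open S15 in
lemma detzero (r : ℝ) (x : Fin 3 → ℝ) (hx : ∀ i, 0 < x i) :
    (hess (fun y => gf y ^ r) x).det = 0 := by
  have h1 := hx 1; have h2 := hx 2
  have hs := sf_pos h1 h2
  have hg := gf_pos (hx 0) h1 h2
  have hsq : sf x * sf x = x 1 * x 2 := Real.mul_self_sqrt (by positivity)
  have hpow : gf x ^ (r-1) = gf x ^ (r-2) * gf x := by
    rw [show r-1 = (r-2)+1 by ring, Real.rpow_add_one hg.ne']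
  have H : ∀ i j, pd2 (fun y => gf y ^ r) i j x
      = r * (r-1) * gf x ^ (r-2) * G x i * G x j + r * gf x ^ (r-1) * T x i j :=
    fun i j => pd2_f r i j hx
  rw [Matrix.det_fin_three]
  simp only [hess, Matrix.of_apply]
  rw [H 0 0, H 0 1, H 0 2, H 1 0, H 1 1, H 1 2, H 2 0, H 2 1, H 2 2]
  simp only [G, T, Matrix.cons_val_zero, Matrix.cons_val_one, Matrix.head_cons,
    Matrix.cons_val_two, Matrix.tail_cons]
  have hx2 : x 2 = sf x * sf x / x 1 := by
    rw [hsq]; field_simp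
  rw [hpow, hx2]
  field_simp
  ring

open S15 in
lemma minor_ne (r : ℝ) (hr : 1 < r) :
    pd2 (fun y => gf y ^ r) 0 1 (fun _ => 1) * pd2 (fun y => gf y ^ r) 1 0 (fun _ => 1)
      - pd2 (fun y => gf y ^ r) 0 0 (fun _ => 1) * pd2 (fun y => gf y ^ r) 1 1 (fun _ => 1) ≠ 0 := by
  have hx : ∀ i : Fin 3, (0:ℝ) < (fun _ => (1:ℝ)) i := fun _ => one_pos
  have hsf : sf (fun _ => 1) = 1 := by simp [sf]
  have hgf : gf (fun _ => 1) = 3 := by simp [gf, hsf]; norm_num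
  have H : ∀ i j, pd2 (fun y => gf y ^ r) i j (fun _ => 1)
      = r * (r-1) * (3:ℝ) ^ (r-2) * G (fun _ => 1) i * G (fun _ => 1) j
        + r * (3:ℝ) ^ (r-1) * T (fun _ => 1) i j := by
    intro i j; rw [pd2_f r i j hx, hgf]
  rw [H 0 1, H 1 0, H 0 0, H 1 1]
  simp only [G, T, hsf, Matrix.cons_val_zero, Matrix.cons_val_one, Matrix.head_cons]
  have h3 : (3:ℝ) ^ (r-1) = (3:ℝ) ^ (r-2) * 3 := by
    rw [show r-1 = (r-2)+1 by ring, Real.rpow_add_one (by norm_num)]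
  rw [h3]
  have hA : (0:ℝ) < (3:ℝ) ^ (r-2) := Real.rpow_pos_of_pos (by norm_num) _
  have : r * (r-1) * (3:ℝ)^(r-2) * 1 * (1 + 1/(2*1)) * (r * (r-1) * (3:ℝ)^(r-2) * (1 + 1/(2*1)) * 1
      + r * ((3:ℝ)^(r-2)*3) * 0)
      - (r * (r-1) * (3:ℝ)^(r-2) * 1 * 1 + r * ((3:ℝ)^(r-2)*3) * 0)
        * (r * (r-1) * (3:ℝ)^(r-2) * (1 + 1/(2*1)) * (1 + 1/(2*1))
          + r * ((3:ℝ)^(r-2)*3) * (-(1:ℝ)^2/(4*1^3)))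
      = 3/4 * (r^2 * (r-1) * ((3:ℝ)^(r-2))^2) := by ring
  norm_num at this ⊢
  rw [this]
  have hpos : 0 < 3/4 * (r^2 * (r-1) * ((3:ℝ)^(r-2))^2) := by
    have h1 : (0:ℝ) < r^2 * (r-1) * ((3:ℝ)^(r-2))^2 :=
      mul_pos (mul_pos (pow_pos (by linarith) 2) (by linarith)) (pow_pos hA 2)
    linarith
  exact hpos.ne'


theorem stmt15 (r : ℝ) (hr : 1 < r) (f : (Fin 3 → ℝ) → ℝ)
    (hf : f = fun x => (x 0 + x 1 + Real.sqrt (x 1 * x 2)) ^ r) :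
    (∀ x : Fin 3 → ℝ, (∀ i, 0 < x i) → (hess f x).det = 0) ∧
    (∃ x : Fin 3 → ℝ, (∀ i, 0 < x i) ∧ ∃ i j k l : Fin 3,
      pd2 f i l x * pd2 f j k x - pd2 f i k x * pd2 f j l x ≠ 0) := by
  subst hf
  constructor
  · intro x hxp
    exact detzero r x hxp
  · exact ⟨fun _ => 1, fun _ => one_pos, 0, 1, 0, 1, minor_ne r hr⟩
end
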